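/- arXiv:1711.02880 — 2 statements merged into one kernel-verified Lean document; each statement's English description precedes it below -/
import Mathlib

section
/- In the randomized pool with heterogeneous degrees, suppose G(λ) < ∞. Then ψ = ∏_{ℓ=1}^{K} (1 − ρ_{|ℓ}), where ρ_{|ℓ} = ρ ∑_{u=1}^{N} p_u C(ℓ−1, d_u−1)/C(K−1, d_u−1) with the convention C(a,b) = 0 when a < b. If moreover ∑_{x∈ℕ^I} (∑_S x_S) Φ(x) λ^x < ∞, then the total mean number of jobs is L = ∑_{ℓ=1}^{K} ρ_{|ℓ} / (1 − ρ_{|ℓ}). -/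
open scoped BigOperators

/-- The balance function of balanced fairness: `Φ(0) = 1` and
`Φ(x) = (∑_{i : x_i > 0} Φ(x - e_i)) / M(⋃_{i : x_i > 0} 𝒦_i)`. -/
noncomputable def Phi {I K : Type} [Fintype I] [DecidableEq I] [DecidableEq K]
    (μ : K → ℝ) (Ka : I → Finset K) (x : I → ℕ) : ℝ :=
  if x = fun _ => 0 then 1
  else (∑ i ∈ (Finset.univ.filter (fun i => 0 < x i)).attach,
      Phi μ Ka (Function.update x i.1 (x i.1 - 1))) /
    (∑ k ∈ (Finset.univ.filter (fun i => 0 < x i)).biUnion Ka, μ k)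
termination_by ∑ i, x i
decreasing_by
  have hi := i.2
  simp only [Finset.mem_filter] at hi
  apply Finset.sum_lt_sum
  · intro j _
    rcases eq_or_ne j i.1 with rfl | h
    · simp [Function.update_self]
    · rw [Function.update_of_ne h]
  · exact ⟨i.1, Finset.mem_univ i.1, by simp [Function.update_self]; omega⟩

/-- The normalization series `G(λ) = ∑_{x∈ℕ^I} Φ(x) λ^x` (as a real tsum). -/
noncomputable def Gf {I K : Type} [Fintype I] [DecidableEq I] [DecidableEq K]
    (μ : K → ℝ) (Ka : I → Finset K) (lam : I → ℝ) : ℝ :=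
  ∑' x : I → ℕ, Phi μ Ka x * ∏ i, lam i ^ x i

/-- Classes of the randomized pool with heterogeneous degrees: a type `u` together with a
`d_u`-element subset of the `K` servers. -/
abbrev HetCls (K N : ℕ) (d : Fin N → ℕ) : Type :=
  Σ u : Fin N, {S : Finset (Fin K) // S.card = d u}

/-- Arrival rate `Kλp_u/C(K,d_u)` of a class of type `u`. -/
noncomputable def hetRate (K N : ℕ) (d : Fin N → ℕ) (p : Fin N → ℝ) (lam : ℝ)
    (c : HetCls K N d) : ℝ :=
  (K : ℝ) * lam * p c.1 / (K.choose (d c.1) : ℝ)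

/-- The load `ρ_{|ℓ} = ρ ∑_u p_u C(ℓ−1,d_u−1)/C(K−1,d_u−1)` of the system restricted to
`ℓ` servers (with the convention `C(a,b) = 0` for `a < b`). -/
noncomputable def hetLoad (K N : ℕ) (d : Fin N → ℕ) (p : Fin N → ℝ) (lam μ : ℝ)
    (ℓ : ℕ) : ℝ :=
  lam / μ * ∑ u, p u * ((ℓ - 1).choose (d u - 1) : ℝ) / ((K - 1).choose (d u - 1) : ℝ)

set_option linter.unusedSectionVars false
set_option maxHeartbeats 1000000

open Finset Function

section General
variable {I Kt : Type} [Fintype I] [DecidableEq I] [DecidableEq Kt]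

/-- support of a state -/
def suppF (x : I → ℕ) : Finset I := Finset.univ.filter (fun i => 0 < x i)

/-- active servers -/
def SrvOf (Ka : I → Finset Kt) (x : I → ℕ) : Finset Kt := (suppF x).biUnion Ka

lemma Phi_zero (μ : Kt → ℝ) (Ka : I → Finset Kt) : Phi μ Ka (fun _ => 0) = 1 := by
  rw [Phi]; simp

lemma Phi_rec (μ : Kt → ℝ) (Ka : I → Finset Kt) {x : I → ℕ} (hx : x ≠ fun _ => 0) :
    Phi μ Ka x = (∑ i ∈ suppF x, Phi μ Ka (Function.update x i (x i - 1))) /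
      (∑ k ∈ SrvOf Ka x, μ k) := by
  rw [Phi, if_neg hx,
    Finset.sum_attach (Finset.univ.filter (fun i => 0 < x i))
      (fun j => Phi μ Ka (Function.update x j (x j - 1)))]
  rfl

lemma sum_update_sub {x : I → ℕ} {j : I} (hj : 0 < x j) :
    ∑ i, Function.update x j (x j - 1) i = (∑ i, x i) - 1 := by
  rw [Finset.sum_update_of_mem (Finset.mem_univ j)]
  have h2 : ∑ i, x i = x j + ∑ i ∈ Finset.univ.erase j, x i :=
    (Finset.add_sum_erase _ _ (Finset.mem_univ j)).symm
  rw [Finset.sdiff_singleton_eq_erase]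
  omega

lemma Phi_nonneg (μ : Kt → ℝ) (hμ : ∀ k, 0 ≤ μ k) (Ka : I → Finset Kt) (x : I → ℕ) :
    0 ≤ Phi μ Ka x := by
  suffices h : ∀ n (x : I → ℕ), (∑ i, x i) ≤ n → 0 ≤ Phi μ Ka x from h (∑ i, x i) x le_rfl
  intro n
  induction n with
  | zero =>
    intro x hx
    have : x = fun _ => 0 := by
      funext i; have := Finset.single_le_sum (f := x) (fun i _ => Nat.zero_le _) (Finset.mem_univ i)
      omega
    rw [this, Phi_zero]; norm_num
  | succ n ih =>
    intro x hx
    by_cases h0 : x = fun _ => 0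
    · rw [h0, Phi_zero]; norm_num
    · rw [Phi_rec μ Ka h0]
      apply div_nonneg
      · apply Finset.sum_nonneg
        intro i hi
        simp only [suppF, Finset.mem_filter] at hi
        exact ih _ (by rw [sum_update_sub hi.2]; omega)
      · exact Finset.sum_nonneg fun k _ => hμ k

/-- the balance identity, valid for all x -/
lemma Phi_balance (μ : Kt → ℝ) (Ka : I → Finset Kt) (hKa : ∀ i, (Ka i).Nonempty)
    (hμ : ∀ k, 0 < μ k) (x : I → ℕ) :
    (∑ k ∈ SrvOf Ka x, μ k) * Phi μ Ka x
      = ∑ i ∈ suppF x, Phi μ Ka (Function.update x i (x i - 1)) := by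
  by_cases h0 : x = fun _ => 0
  · subst h0
    have hs : suppF (fun _ : I => 0) = ∅ := by simp [suppF]
    simp [SrvOf, hs]
  · rw [Phi_rec μ Ka h0]
    have hne : (SrvOf Ka x).Nonempty := by
      have : (suppF x).Nonempty := by
        rcases Function.ne_iff.1 h0 with ⟨i, hi⟩
        exact ⟨i, by simp [suppF]; omega⟩
      rcases this with ⟨i, hi⟩
      rcases hKa i with ⟨k, hk⟩
      exact ⟨k, Finset.mem_biUnion.2 ⟨i, hi, hk⟩⟩
    have hpos : 0 < ∑ k ∈ SrvOf Ka x, μ k := Finset.sum_pos (fun k _ => hμ k) hne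
    field_simp

end General

section Series
variable {I Kt : Type} [Fintype I] [DecidableEq I] [DecidableEq Kt]
variable (μ0 : ℝ) (Ka : I → Finset Kt) (lam : I → ℝ)

/-- weight λ^x -/
def wtF (x : I → ℕ) : ℝ := ∏ i, lam i ^ x i

/-- the summand Φ(x)λ^x -/
noncomputable def fF (x : I → ℕ) : ℝ := Phi (fun _ => μ0) Ka x * wtF lam x

/-- restricted normalization constant -/
noncomputable def GA (A : Finset Kt) : ℝ :=
  ∑' x : I → ℕ, if SrvOf Ka x ⊆ A then fF μ0 Ka lam x else 0

/-- restricted weighted (by number of jobs) sum -/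
noncomputable def GhA (A : Finset Kt) : ℝ :=
  ∑' x : I → ℕ, if SrvOf Ka x ⊆ A then (∑ i, (x i : ℝ)) * fF μ0 Ka lam x else 0

/-- total arrival rate of classes inside A -/
noncomputable def lamA (A : Finset Kt) : ℝ := ∑ i, if Ka i ⊆ A then lam i else 0

variable {μ0 Ka lam}

lemma fF_nonneg (hμ0 : 0 < μ0) (hlam : ∀ i, 0 ≤ lam i) (x : I → ℕ) :
    0 ≤ fF μ0 Ka lam x :=
  mul_nonneg (Phi_nonneg _ (fun _ => hμ0.le) _ _)
    (Finset.prod_nonneg fun i _ => pow_nonneg (hlam i) _)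

/-- adding one job of class i -/
def addOne (x : I → ℕ) (i : I) : I → ℕ := Function.update x i (x i + 1)

lemma addOne_injective (i : I) : Function.Injective (fun x : I → ℕ => addOne x i) := by
  intro a b hab
  funext j
  have h := congrFun hab
  rcases eq_or_ne j i with rfl | hj
  · have := h j; simp [addOne, Function.update_self] at this; omega
  · have := h j; simpa [addOne, Function.update_of_ne hj] using this

lemma suppF_addOne (x : I → ℕ) (i : I) : suppF (addOne x i) = insert i (suppF x) := by
  ext j
  rcases eq_or_ne j i with rfl | hj
  · simp only [suppF, Finset.mem_filter, Finset.mem_univ, true_and, Finset.mem_insert]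
    simp [addOne, Function.update_self]
  · simp only [suppF, Finset.mem_filter, Finset.mem_univ, true_and, Finset.mem_insert]
    simp [addOne, Function.update_of_ne hj, hj]

lemma SrvOf_addOne (x : I → ℕ) (i : I) :
    SrvOf Ka (addOne x i) = Ka i ∪ SrvOf Ka x := by
  rw [SrvOf, suppF_addOne, Finset.biUnion_insert]; rfl

lemma wtF_addOne (x : I → ℕ) (i : I) :
    wtF lam (addOne x i) = lam i * wtF lam x := by
  rw [wtF, wtF, ← Finset.mul_prod_erase _ _ (Finset.mem_univ i),
    ← Finset.mul_prod_erase _ (fun j => lam j ^ x j) (Finset.mem_univ i)]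
  have h1 : ∀ j ∈ Finset.univ.erase i, lam j ^ (addOne x i j) = lam j ^ x j := by
    intro j hj
    rw [addOne, Function.update_of_ne (Finset.mem_erase.1 hj).1]
  rw [Finset.prod_congr rfl h1, addOne, Function.update_self, pow_succ]
  ring

lemma sum_addOne (x : I → ℕ) (i : I) : ∑ j, addOne x i j = (∑ j, x j) + 1 := by
  rw [addOne, Finset.sum_update_of_mem (Finset.mem_univ i), Finset.sdiff_singleton_eq_erase]
  have h2 : ∑ j, x j = x i + ∑ j ∈ Finset.univ.erase i, x j :=
    (Finset.add_sum_erase _ _ (Finset.mem_univ i)).symm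
  omega

lemma update_addOne (x : I → ℕ) (i : I) :
    Function.update (addOne x i) i (addOne x i i - 1) = x := by
  funext j
  rcases eq_or_ne j i with rfl | hj
  · simp [addOne, Function.update_self]
  · simp [addOne, Function.update_of_ne hj]

lemma addOne_update {x : I → ℕ} {i : I} (hx : 0 < x i) :
    addOne (Function.update x i (x i - 1)) i = x := by
  funext j
  rcases eq_or_ne j i with rfl | hj
  · simp [addOne, Function.update_self]; omega
  · simp [addOne, Function.update_of_ne hj]

/-- Generic change of variables along `addOne · i`. -/
lemma shift_tsum (A : Finset Kt) (i : I) (g : (I → ℕ) → ℝ) :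
    (∑' x : I → ℕ, if 0 < x i ∧ SrvOf Ka x ⊆ A then
        g (Function.update x i (x i - 1)) * wtF lam x else 0)
      = ∑' y : I → ℕ, if Ka i ⊆ A ∧ SrvOf Ka y ⊆ A then g y * (lam i * wtF lam y) else 0 := by
  set F : (I → ℕ) → ℝ := fun x => if 0 < x i ∧ SrvOf Ka x ⊆ A then
      g (Function.update x i (x i - 1)) * wtF lam x else 0 with hF
  have hcomp : ∀ y, F (addOne y i) =
      (if Ka i ⊆ A ∧ SrvOf Ka y ⊆ A then g y * (lam i * wtF lam y) else 0) := by
    intro y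
    have h1 : 0 < addOne y i i := by simp [addOne, Function.update_self]
    have h2 : SrvOf Ka (addOne y i) ⊆ A ↔ (Ka i ⊆ A ∧ SrvOf Ka y ⊆ A) := by
      rw [SrvOf_addOne, Finset.union_subset_iff]
    rw [hF]
    simp only [h1, true_and, update_addOne, wtF_addOne, h2]
  have hsupp : Function.support F ⊆ Set.range (fun x => addOne x i) := by
    intro x hx
    rw [Function.mem_support, hF] at hx
    by_cases hxi : 0 < x i
    · exact ⟨Function.update x i (x i - 1), addOne_update hxi⟩
    · simp [hxi] at hx
  rw [← Function.Injective.tsum_eq (addOne_injective i) hsupp]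
  exact tsum_congr hcomp

lemma shift_summable (A : Finset Kt) (i : I) (g : (I → ℕ) → ℝ)
    (h : Summable (fun y : I → ℕ =>
      if Ka i ⊆ A ∧ SrvOf Ka y ⊆ A then g y * (lam i * wtF lam y) else 0)) :
    Summable (fun x : I → ℕ => if 0 < x i ∧ SrvOf Ka x ⊆ A then
        g (Function.update x i (x i - 1)) * wtF lam x else 0) := by
  set F : (I → ℕ) → ℝ := fun x => if 0 < x i ∧ SrvOf Ka x ⊆ A then
      g (Function.update x i (x i - 1)) * wtF lam x else 0 with hF
  have hsupp : Function.support F ⊆ Set.range (fun x => addOne x i) := by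
    intro x hx
    rw [Function.mem_support, hF] at hx
    by_cases hxi : 0 < x i
    · exact ⟨Function.update x i (x i - 1), addOne_update hxi⟩
    · simp [hxi] at hx
  rw [← Function.Injective.summable_iff (addOne_injective i) ?_]
  · apply h.congr
    intro y
    have h1 : 0 < addOne y i i := by simp [addOne, Function.update_self]
    have h2 : SrvOf Ka (addOne y i) ⊆ A ↔ (Ka i ⊆ A ∧ SrvOf Ka y ⊆ A) := by
      rw [SrvOf_addOne, Finset.union_subset_iff]
    show _ = F (addOne y i)
    rw [hF]
    simp only [h1, true_and, update_addOne, wtF_addOne, h2]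
  · intro x hx
    by_contra hne
    exact hx (hsupp hne)

end Series

section Master
variable {I Kt : Type} [Fintype I] [DecidableEq I] [DecidableEq Kt]
variable {μ0 : ℝ} {Ka : I → Finset Kt} {lam : I → ℝ}

lemma summable_restr {h : (I → ℕ) → ℝ} (hh : Summable h) (hh0 : ∀ x, 0 ≤ h x)
    (P : (I → ℕ) → Prop) [DecidablePred P] :
    Summable (fun x : I → ℕ => if P x then h x else 0) := by
  apply Summable.of_nonneg_of_le _ _ hh
  · intro x; split
    · exact hh0 x
    · exact le_refl 0
  · intro x; split
    · exact le_refl _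
    · exact hh0 x

lemma tsum_ite_mul_left {h : (I → ℕ) → ℝ} (c : ℝ) (P : (I → ℕ) → Prop) [DecidablePred P] :
    (∑' x : I → ℕ, if P x then c * h x else 0)
      = c * ∑' x : I → ℕ, if P x then h x else 0 := by
  rw [← tsum_mul_left]
  apply tsum_congr
  intro x
  split <;> simp

lemma server_side (hμ0 : 0 < μ0) (h : (I → ℕ) → ℝ) (hh : Summable h) (hh0 : ∀ x, 0 ≤ h x)
    (A : Finset Kt) :
    (∑' x : I → ℕ, if SrvOf Ka x ⊆ A then (μ0 * (SrvOf Ka x).card) * h x else 0)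
      = μ0 * ∑ k ∈ A, ((∑' x : I → ℕ, if SrvOf Ka x ⊆ A then h x else 0)
          - (∑' x : I → ℕ, if SrvOf Ka x ⊆ A.erase k then h x else 0)) := by
  have hpt : ∀ x : I → ℕ, (if SrvOf Ka x ⊆ A then (μ0 * (SrvOf Ka x).card) * h x else 0)
      = ∑ k ∈ A, if (k ∈ SrvOf Ka x ∧ SrvOf Ka x ⊆ A) then μ0 * h x else 0 := by
    intro x
    by_cases hs : SrvOf Ka x ⊆ A
    · simp only [hs, and_true, if_true]
      rw [Finset.sum_ite_mem, Finset.inter_eq_right.2 hs, Finset.sum_const, nsmul_eq_mul]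
      ring
    · simp [hs]
  rw [tsum_congr hpt, Summable.tsum_finsetSum (fun k _ => ?_)]
  · rw [Finset.mul_sum]
    apply Finset.sum_congr rfl
    intro k hk
    have hdecomp : ∀ x : I → ℕ, (if SrvOf Ka x ⊆ A then μ0 * h x else 0)
        = (if (k ∈ SrvOf Ka x ∧ SrvOf Ka x ⊆ A) then μ0 * h x else 0)
          + (if SrvOf Ka x ⊆ A.erase k then μ0 * h x else 0) := by
      intro x
      by_cases hs : SrvOf Ka x ⊆ A
      · by_cases hks : k ∈ SrvOf Ka x
        · have : ¬ SrvOf Ka x ⊆ A.erase k := fun hc => (Finset.subset_erase.1 hc).2 hks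
          simp [hs, hks, this]
        · have : SrvOf Ka x ⊆ A.erase k := Finset.subset_erase.2 ⟨hs, hks⟩
          simp [hs, hks, this]
      · have : ¬ SrvOf Ka x ⊆ A.erase k := fun hc => hs (hc.trans (Finset.erase_subset _ _))
        simp [hs, this]
    have hsum1 : Summable (fun x : I → ℕ =>
        if (k ∈ SrvOf Ka x ∧ SrvOf Ka x ⊆ A) then μ0 * h x else 0) :=
      summable_restr (hh.mul_left μ0) (fun x => mul_nonneg hμ0.le (hh0 x)) _
    have hsum2 : Summable (fun x : I → ℕ =>
        if SrvOf Ka x ⊆ A.erase k then μ0 * h x else 0) :=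
      summable_restr (hh.mul_left μ0) (fun x => mul_nonneg hμ0.le (hh0 x)) _
    have heq := Summable.tsum_add hsum1 hsum2
    rw [← tsum_congr hdecomp] at heq
    rw [tsum_ite_mul_left μ0 (fun x => SrvOf Ka x ⊆ A),
      tsum_ite_mul_left μ0 (fun x => SrvOf Ka x ⊆ A.erase k)] at heq
    linarith
  · exact summable_restr (hh.mul_left μ0) (fun x => mul_nonneg hμ0.le (hh0 x)) _

end Master

section Balance
variable {I Kt : Type} [Fintype I] [DecidableEq I] [DecidableEq Kt]
variable {μ0 : ℝ} {Ka : I → Finset Kt} {lam : I → ℝ}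

lemma wtF_nonneg (hlam : ∀ i, 0 ≤ lam i) (y : I → ℕ) : 0 ≤ wtF lam y :=
  Finset.prod_nonneg fun j _ => pow_nonneg (hlam j) _

lemma mu_card (μ0 : ℝ) (S : Finset Kt) : (∑ k ∈ S, μ0) = μ0 * S.card := by
  rw [Finset.sum_const, nsmul_eq_mul]; ring

lemma balance_side_plain (hμ0 : 0 < μ0) (hKa : ∀ i, (Ka i).Nonempty)
    (hlam : ∀ i, 0 ≤ lam i) (hf : Summable (fF μ0 Ka lam)) (A : Finset Kt) :
    (∑' x : I → ℕ, if SrvOf Ka x ⊆ A then (μ0 * (SrvOf Ka x).card) * fF μ0 Ka lam x else 0)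
      = lamA Ka lam A * GA μ0 Ka lam A := by
  have hbal : ∀ x : I → ℕ, (μ0 * (SrvOf Ka x).card) * Phi (fun _ => μ0) Ka x
      = ∑ i ∈ suppF x, Phi (fun _ => μ0) Ka (Function.update x i (x i - 1)) := by
    intro x
    rw [← mu_card]
    exact Phi_balance _ _ hKa (fun _ => hμ0) x
  have hpt : ∀ x : I → ℕ,
      (if SrvOf Ka x ⊆ A then (μ0 * (SrvOf Ka x).card) * fF μ0 Ka lam x else 0)
      = ∑ i : I, if (0 < x i ∧ SrvOf Ka x ⊆ A) then
          Phi (fun _ => μ0) Ka (Function.update x i (x i - 1)) * wtF lam x else 0 := by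
    intro x
    by_cases hs : SrvOf Ka x ⊆ A
    · simp only [hs, and_true, if_true]
      rw [fF, ← mul_assoc, hbal x, Finset.sum_mul, suppF, Finset.sum_filter]
    · simp [hs]
  rw [tsum_congr hpt, Summable.tsum_finsetSum (fun i _ => ?_)]
  · have hterm : ∀ i : I, (∑' x : I → ℕ, if (0 < x i ∧ SrvOf Ka x ⊆ A) then
        Phi (fun _ => μ0) Ka (Function.update x i (x i - 1)) * wtF lam x else 0)
        = (if Ka i ⊆ A then lam i else 0) * GA μ0 Ka lam A := by
      intro i
      rw [shift_tsum A i (Phi (fun _ => μ0) Ka)]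
      by_cases hKiA : Ka i ⊆ A
      · simp only [hKiA, true_and, if_true]
        have : ∀ y : I → ℕ, (if SrvOf Ka y ⊆ A then
            Phi (fun _ => μ0) Ka y * (lam i * wtF lam y) else 0)
            = lam i * (if SrvOf Ka y ⊆ A then fF μ0 Ka lam y else 0) := by
          intro y; rw [fF]; split <;> ring
        rw [tsum_congr this, tsum_mul_left]; rfl
      · simp only [hKiA, false_and, if_false, tsum_zero]; ring
    rw [Finset.sum_congr rfl (fun i _ => hterm i), ← Finset.sum_mul]; rfl
  · apply shift_summable
    apply Summable.of_nonneg_of_le _ _ (hf.mul_left (lam i))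
    · intro y; split
      · exact mul_nonneg (Phi_nonneg _ (fun _ => hμ0.le) _ _)
          (mul_nonneg (hlam i) (wtF_nonneg hlam y))
      · exact le_refl 0
    · intro y; split
      · rw [fF]; apply le_of_eq; ring
      · exact mul_nonneg (hlam i) (fF_nonneg hμ0 hlam y)

end Balance

section BalanceHat
variable {I Kt : Type} [Fintype I] [DecidableEq I] [DecidableEq Kt]
variable {μ0 : ℝ} {Ka : I → Finset Kt} {lam : I → ℝ}

lemma cast_sum_update {x : I → ℕ} {i : I} (hx : 0 < x i) :
    (∑ j, (Function.update x i (x i - 1) j : ℝ)) + 1 = ∑ j, (x j : ℝ) := by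
  have h1 : ∑ j, Function.update x i (x i - 1) j = (∑ j, x j) - 1 := sum_update_sub hx
  have h2 : 1 ≤ ∑ j, x j :=
    le_trans hx (Finset.single_le_sum (f := x) (fun j _ => Nat.zero_le _) (Finset.mem_univ i))
  have h3 : (∑ j, (Function.update x i (x i - 1) j : ℝ))
      = ((∑ j, Function.update x i (x i - 1) j : ℕ) : ℝ) := by push_cast; rfl
  have h4 : (∑ j, (x j : ℝ)) = ((∑ j, x j : ℕ) : ℝ) := by push_cast; rfl
  rw [h3, h4, h1, Nat.cast_sub h2]
  ring

lemma balance_side_hat (hμ0 : 0 < μ0) (hKa : ∀ i, (Ka i).Nonempty)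
    (hlam : ∀ i, 0 ≤ lam i) (hf : Summable (fF μ0 Ka lam))
    (hS : Summable (fun x : I → ℕ => (∑ i, (x i : ℝ)) * fF μ0 Ka lam x)) (A : Finset Kt) :
    (∑' x : I → ℕ, if SrvOf Ka x ⊆ A then
        (μ0 * (SrvOf Ka x).card) * ((∑ i, (x i : ℝ)) * fF μ0 Ka lam x) else 0)
      = lamA Ka lam A * (GhA μ0 Ka lam A + GA μ0 Ka lam A) := by
  set g : (I → ℕ) → ℝ := fun z => ((∑ j, (z j : ℝ)) + 1) * Phi (fun _ => μ0) Ka z with hg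
  have hbal : ∀ x : I → ℕ, (μ0 * (SrvOf Ka x).card) * Phi (fun _ => μ0) Ka x
      = ∑ i ∈ suppF x, Phi (fun _ => μ0) Ka (Function.update x i (x i - 1)) := by
    intro x
    rw [← mu_card]
    exact Phi_balance _ _ hKa (fun _ => hμ0) x
  have hpt : ∀ x : I → ℕ,
      (if SrvOf Ka x ⊆ A then (μ0 * (SrvOf Ka x).card) * ((∑ i, (x i : ℝ)) * fF μ0 Ka lam x) else 0)
      = ∑ i : I, if (0 < x i ∧ SrvOf Ka x ⊆ A) then
          g (Function.update x i (x i - 1)) * wtF lam x else 0 := by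
    intro x
    by_cases hs : SrvOf Ka x ⊆ A
    · simp only [hs, and_true, if_true]
      have hlhs : (μ0 * (SrvOf Ka x).card) * ((∑ i, (x i : ℝ)) * fF μ0 Ka lam x)
          = ∑ i ∈ suppF x, ((∑ j, (x j : ℝ)) * Phi (fun _ => μ0) Ka (Function.update x i (x i - 1)))
              * wtF lam x := by
        rw [fF, ← Finset.sum_mul, ← Finset.mul_sum, ← hbal x]
        ring
      rw [hlhs]
      have hcong : ∀ i ∈ suppF x,
          (∑ j, (x j : ℝ)) * Phi (fun _ => μ0) Ka (Function.update x i (x i - 1)) * wtF lam x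
          = g (Function.update x i (x i - 1)) * wtF lam x := by
        intro i hi
        simp only [suppF, Finset.mem_filter] at hi
        rw [hg]
        simp only
        rw [cast_sum_update hi.2]
      rw [Finset.sum_congr rfl hcong, suppF, Finset.sum_filter]
    · simp [hs]
  rw [tsum_congr hpt, Summable.tsum_finsetSum (fun i _ => ?_)]
  · have hterm : ∀ i : I, (∑' x : I → ℕ, if (0 < x i ∧ SrvOf Ka x ⊆ A) then
        g (Function.update x i (x i - 1)) * wtF lam x else 0)
        = (if Ka i ⊆ A then lam i else 0) * (GhA μ0 Ka lam A + GA μ0 Ka lam A) := by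
      intro i
      rw [shift_tsum A i g]
      by_cases hKiA : Ka i ⊆ A
      · simp only [hKiA, true_and, if_true]
        have hpt2 : ∀ y : I → ℕ, (if SrvOf Ka y ⊆ A then g y * (lam i * wtF lam y) else 0)
            = lam i * ((if SrvOf Ka y ⊆ A then (∑ j, (y j : ℝ)) * fF μ0 Ka lam y else 0)
                + (if SrvOf Ka y ⊆ A then fF μ0 Ka lam y else 0)) := by
          intro y
          rw [hg]; simp only
          split
          · rw [fF]; ring
          · ring
        rw [tsum_congr hpt2, tsum_mul_left,
          Summable.tsum_add (summable_restr hS (fun x => mul_nonneg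
              (Finset.sum_nonneg fun j _ => Nat.cast_nonneg _) (fF_nonneg hμ0 hlam x)) _)
            (summable_restr hf (fF_nonneg hμ0 hlam) _)]
        rfl
      · simp only [hKiA, false_and, if_false, tsum_zero]; ring
    rw [Finset.sum_congr rfl (fun i _ => hterm i), ← Finset.sum_mul]; rfl
  · apply shift_summable
    apply Summable.of_nonneg_of_le _ _ (Summable.mul_left (lam i) (hS.add hf))
    · intro y; split
      · apply mul_nonneg
        · apply mul_nonneg _ (Phi_nonneg _ (fun _ => hμ0.le) _ _)
          positivity
        · exact mul_nonneg (hlam i) (wtF_nonneg hlam y)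
      · exact le_refl 0
    · intro y; split
      · rw [hg, fF]; simp only; apply le_of_eq; ring
      · apply mul_nonneg (hlam i)
        apply add_nonneg
        · exact mul_nonneg (Finset.sum_nonneg fun j _ => Nat.cast_nonneg _)
            (fF_nonneg hμ0 hlam y)
        · exact fF_nonneg hμ0 hlam y

end BalanceHat

section Facts
variable {I Kt : Type} [Fintype I] [DecidableEq I] [DecidableEq Kt]
variable {μ0 : ℝ} {Ka : I → Finset Kt} {lam : I → ℝ}

lemma SrvOf_zero : SrvOf Ka (fun _ : I => 0) = ∅ := by
  have : suppF (fun _ : I => 0) = ∅ := by simp [suppF]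
  rw [SrvOf, this, Finset.biUnion_empty]

lemma fF_zero : fF μ0 Ka lam (fun _ : I => 0) = 1 := by
  rw [fF, Phi_zero, wtF]
  simp

lemma SrvOf_nonempty (hKa : ∀ i, (Ka i).Nonempty) {x : I → ℕ} (hx : x ≠ fun _ => 0) :
    (SrvOf Ka x).Nonempty := by
  have hsupp : (suppF x).Nonempty := by
    rcases Function.ne_iff.1 hx with ⟨i, hi⟩
    exact ⟨i, by simp [suppF]; omega⟩
  rcases hsupp with ⟨i, hi⟩
  rcases hKa i with ⟨k, hk⟩
  exact ⟨k, Finset.mem_biUnion.2 ⟨i, hi, hk⟩⟩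

lemma GA_empty (hKa : ∀ i, (Ka i).Nonempty) : GA μ0 Ka lam (∅ : Finset Kt) = 1 := by
  rw [GA, tsum_eq_single (fun _ : I => 0) ?_]
  · rw [SrvOf_zero, fF_zero]
    simp
  · intro x hx
    have := SrvOf_nonempty hKa hx
    rw [if_neg]
    intro hsub
    rcases this with ⟨k, hk⟩
    exact absurd (hsub hk) (Finset.notMem_empty k)

lemma GhA_empty (hKa : ∀ i, (Ka i).Nonempty) : GhA μ0 Ka lam (∅ : Finset Kt) = 0 := by
  rw [GhA, tsum_eq_single (fun _ : I => 0) ?_]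
  · simp
  · intro x hx
    have := SrvOf_nonempty hKa hx
    rw [if_neg]
    intro hsub
    rcases this with ⟨k, hk⟩
    exact absurd (hsub hk) (Finset.notMem_empty k)

lemma GA_ge_one (hμ0 : 0 < μ0) (hlam : ∀ i, 0 ≤ lam i) (hf : Summable (fF μ0 Ka lam))
    (A : Finset Kt) : 1 ≤ GA μ0 Ka lam A := by
  have h0 : (if SrvOf Ka (fun _ : I => 0) ⊆ A then fF μ0 Ka lam (fun _ : I => 0) else 0) = 1 := by
    rw [SrvOf_zero, fF_zero, if_pos (Finset.empty_subset A)]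
  rw [GA, ← h0]
  refine Summable.le_tsum (summable_restr hf (fF_nonneg hμ0 hlam)
    (fun x : I → ℕ => SrvOf Ka x ⊆ A)) (fun _ : I => 0) ?_
  intro j _
  split
  · exact fF_nonneg hμ0 hlam j
  · exact le_refl 0

lemma GhA_nonneg (hμ0 : 0 < μ0) (hlam : ∀ i, 0 ≤ lam i) (A : Finset Kt) :
    0 ≤ GhA μ0 Ka lam A := by
  apply tsum_nonneg
  intro x
  split
  · exact mul_nonneg (Finset.sum_nonneg fun j _ => Nat.cast_nonneg _) (fF_nonneg hμ0 hlam x)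
  · exact le_refl 0

lemma master_plain (hμ0 : 0 < μ0) (hKa : ∀ i, (Ka i).Nonempty)
    (hlam : ∀ i, 0 ≤ lam i) (hf : Summable (fF μ0 Ka lam)) (A : Finset Kt) :
    μ0 * ∑ k ∈ A, (GA μ0 Ka lam A - GA μ0 Ka lam (A.erase k))
      = lamA Ka lam A * GA μ0 Ka lam A := by
  simp only [GA]
  rw [← server_side hμ0 (fF μ0 Ka lam) hf (fF_nonneg hμ0 hlam) A]
  have := balance_side_plain hμ0 hKa hlam hf A
  simp only [GA] at this
  exact this

lemma master_hat (hμ0 : 0 < μ0) (hKa : ∀ i, (Ka i).Nonempty)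
    (hlam : ∀ i, 0 ≤ lam i) (hf : Summable (fF μ0 Ka lam))
    (hS : Summable (fun x : I → ℕ => (∑ i, (x i : ℝ)) * fF μ0 Ka lam x)) (A : Finset Kt) :
    μ0 * ∑ k ∈ A, (GhA μ0 Ka lam A - GhA μ0 Ka lam (A.erase k))
      = lamA Ka lam A * (GhA μ0 Ka lam A + GA μ0 Ka lam A) := by
  simp only [GhA, GA]
  rw [← server_side hμ0 (fun x => (∑ i, (x i : ℝ)) * fF μ0 Ka lam x) hS
    (fun x => mul_nonneg (Finset.sum_nonneg fun j _ => Nat.cast_nonneg _) (fF_nonneg hμ0 hlam x)) A]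
  have := balance_side_hat hμ0 hKa hlam hf hS A
  simp only [GhA, GA] at this
  exact this

end Facts

section Exchange
variable {I Kt : Type} [Fintype I] [DecidableEq I] [DecidableEq Kt]
variable {μ0 : ℝ} {Ka : I → Finset Kt} {lam : I → ℝ}

lemma comp_eq_zero_iff (e : I ≃ I) (x : I → ℕ) :
    ((x ∘ ⇑e.symm) = fun _ => 0) ↔ (x = fun _ => 0) := by
  constructor
  · intro h
    funext i
    have := congrFun h (e i)
    simpa using this
  · intro h
    subst h
    rfl

lemma suppF_comp (e : I ≃ I) (x : I → ℕ) :
    suppF (x ∘ ⇑e.symm) = (suppF x).image e := by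
  ext j
  simp only [suppF, Finset.mem_filter, Finset.mem_univ, true_and, Finset.mem_image,
    Function.comp_apply]
  constructor
  · intro h
    exact ⟨e.symm j, h, e.apply_symm_apply j⟩
  · rintro ⟨i, hi, rfl⟩
    simpa using hi

lemma SrvOf_comp (e : I ≃ I) (σ : Kt ≃ Kt) (hKa : ∀ i, Ka (e i) = (Ka i).image σ)
    (x : I → ℕ) : SrvOf Ka (x ∘ ⇑e.symm) = (SrvOf Ka x).image σ := by
  rw [SrvOf, suppF_comp, Finset.image_biUnion, SrvOf, Finset.biUnion_image]
  apply Finset.biUnion_congr rfl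
  intro i _
  exact hKa i

lemma update_comp (e : I ≃ I) (x : I → ℕ) (i : I) (v : ℕ) :
    Function.update (x ∘ ⇑e.symm) (e i) v = (Function.update x i v) ∘ ⇑e.symm := by
  funext j
  rcases eq_or_ne j (e i) with rfl | hj
  · rw [Function.update_self]
    have h3 : e.symm (e i) = i := e.symm_apply_apply i
    rw [Function.comp_apply, h3, Function.update_self]
  · have h2 : e.symm j ≠ i := fun hc => hj (by rw [← hc, e.apply_symm_apply])
    simp [Function.update_of_ne hj, Function.comp_apply, Function.update_of_ne h2]

lemma Phi_equiv (μ0 : ℝ) (e : I ≃ I) (σ : Kt ≃ Kt)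
    (hKaE : ∀ i, Ka (e i) = (Ka i).image σ) (x : I → ℕ) :
    Phi (fun _ => μ0) Ka (x ∘ ⇑e.symm) = Phi (fun _ => μ0) Ka x := by
  suffices h : ∀ n (x : I → ℕ), (∑ i, x i) ≤ n →
      Phi (fun _ => μ0) Ka (x ∘ ⇑e.symm) = Phi (fun _ => μ0) Ka x from h (∑ i, x i) x le_rfl
  intro n
  induction n with
  | zero =>
    intro x hx
    have : x = fun _ => 0 := by
      funext i
      have := Finset.single_le_sum (f := x) (fun i _ => Nat.zero_le _) (Finset.mem_univ i)
      omega
    subst this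
    rfl
  | succ n ih =>
    intro x hx
    by_cases h0 : x = fun _ => 0
    · subst h0; rfl
    · have h0' : (x ∘ ⇑e.symm) ≠ fun _ => 0 := fun hc => h0 ((comp_eq_zero_iff e x).1 hc)
      rw [Phi_rec _ _ h0', Phi_rec _ _ h0]
      have hsrv : SrvOf Ka (x ∘ ⇑e.symm) = (SrvOf Ka x).image σ := SrvOf_comp e σ hKaE x
      have hden : (∑ k ∈ SrvOf Ka (x ∘ ⇑e.symm), μ0) = ∑ k ∈ SrvOf Ka x, μ0 := by
        rw [hsrv, mu_card, mu_card, Finset.card_image_of_injective _ σ.injective]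
      rw [hden]
      congr 1
      rw [suppF_comp]
      rw [Finset.sum_image (fun a _ b _ hab => e.injective hab)]
      apply Finset.sum_congr rfl
      intro i hi
      simp only [suppF, Finset.mem_filter] at hi
      have hx' : (x ∘ ⇑e.symm) (e i) = x i := by simp
      rw [hx', update_comp]
      apply ih
      rw [sum_update_sub hi.2]
      omega

lemma wtF_comp (e : I ≃ I) (hlamE : ∀ i, lam (e i) = lam i) (x : I → ℕ) :
    wtF lam (x ∘ ⇑e.symm) = wtF lam x := by
  rw [wtF, wtF]
  simp only [Function.comp_apply]
  rw [← Equiv.prod_comp e (fun j => lam j ^ (x (e.symm j)))]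
  apply Finset.prod_congr rfl
  intro i _
  rw [hlamE i, Equiv.symm_apply_apply]

lemma sum_cast_comp (e : I ≃ I) (x : I → ℕ) :
    (∑ j, ((x ∘ ⇑e.symm) j : ℝ)) = ∑ j, (x j : ℝ) := by
  rw [← Equiv.sum_comp e.symm (fun j => (x j : ℝ))]
  rfl

lemma GA_equiv (hμ0 : 0 < μ0) (e : I ≃ I) (σ : Kt ≃ Kt)
    (hKaE : ∀ i, Ka (e i) = (Ka i).image σ) (hlamE : ∀ i, lam (e i) = lam i)
    (B : Finset Kt) : GA μ0 Ka lam (B.image ⇑σ) = GA μ0 Ka lam B := by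
  rw [GA, GA]
  rw [← Equiv.tsum_eq (Equiv.arrowCongr e (Equiv.refl ℕ))
    (fun y => if SrvOf Ka y ⊆ B.image ⇑σ then fF μ0 Ka lam y else 0)]
  apply tsum_congr
  intro x
  have hE : (Equiv.arrowCongr e (Equiv.refl ℕ)) x = x ∘ ⇑e.symm := by
    funext j; rfl
  rw [hE, SrvOf_comp e σ hKaE]
  have hfF : fF μ0 Ka lam (x ∘ ⇑e.symm) = fF μ0 Ka lam x := by
    rw [fF, fF, Phi_equiv μ0 e σ hKaE, wtF_comp e hlamE]
  rw [hfF]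
  simp only [Finset.image_subset_image_iff σ.injective]

lemma GhA_equiv (hμ0 : 0 < μ0) (e : I ≃ I) (σ : Kt ≃ Kt)
    (hKaE : ∀ i, Ka (e i) = (Ka i).image σ) (hlamE : ∀ i, lam (e i) = lam i)
    (B : Finset Kt) : GhA μ0 Ka lam (B.image ⇑σ) = GhA μ0 Ka lam B := by
  rw [GhA, GhA]
  rw [← Equiv.tsum_eq (Equiv.arrowCongr e (Equiv.refl ℕ))
    (fun y => if SrvOf Ka y ⊆ B.image ⇑σ then (∑ i, (y i : ℝ)) * fF μ0 Ka lam y else 0)]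
  apply tsum_congr
  intro x
  have hE : (Equiv.arrowCongr e (Equiv.refl ℕ)) x = x ∘ ⇑e.symm := by
    funext j; rfl
  rw [hE, SrvOf_comp e σ hKaE]
  have hfF : fF μ0 Ka lam (x ∘ ⇑e.symm) = fF μ0 Ka lam x := by
    rw [fF, fF, Phi_equiv μ0 e σ hKaE, wtF_comp e hlamE]
  rw [hfF, sum_cast_comp]
  simp only [Finset.image_subset_image_iff σ.injective]

end Exchange

section Perm
variable {α : Type} [Fintype α] [DecidableEq α]

lemma exists_perm_image {A B : Finset α} (h : A.card = B.card) :
    ∃ σ : α ≃ α, B.image ⇑σ = A := by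
  classical
  have h1 : Fintype.card {x // x ∈ B} = Fintype.card {x // x ∈ A} := by
    rw [Fintype.card_coe, Fintype.card_coe, h]
  have h2 : Fintype.card {x // x ∉ B} = Fintype.card {x // x ∉ A} := by
    rw [Fintype.card_subtype_compl, Fintype.card_subtype_compl, h1]
  let e1 : {x // x ∈ B} ≃ {x // x ∈ A} := Fintype.equivOfCardEq h1
  let e2 : {x // x ∉ B} ≃ {x // x ∉ A} := Fintype.equivOfCardEq h2
  set σ : α ≃ α := (Equiv.sumCompl (· ∈ B)).symm.trans ((e1.sumCongr e2).trans
    (Equiv.sumCompl (· ∈ A))) with hσ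
  refine ⟨σ, ?_⟩
  apply Finset.eq_of_subset_of_card_le
  · intro a ha
    rcases Finset.mem_image.1 ha with ⟨b, hb, rfl⟩
    have hs : σ b = ((e1 ⟨b, hb⟩ : {x // x ∈ A}) : α) := by
      rw [hσ]
      simp only [Equiv.trans_apply]
      rw [Equiv.sumCompl_symm_apply_of_pos (p := (· ∈ B)) hb]
      rfl
    rw [hs]
    exact (e1 ⟨b, hb⟩).2
  · rw [Finset.card_image_of_injective _ σ.injective, ← h]

end Perm

section Choose

lemma choose_mul_nat (K d : ℕ) (hd : 1 ≤ d) (hK : 1 ≤ K) :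
    K.choose d * d = K * (K - 1).choose (d - 1) := by
  obtain ⟨d', rfl⟩ : ∃ d', d = d' + 1 := ⟨d - 1, by omega⟩
  obtain ⟨K', rfl⟩ : ∃ K', K = K' + 1 := ⟨K - 1, by omega⟩
  simp only [Nat.add_sub_cancel]
  simpa [Nat.succ_eq_add_one, mul_comm] using (Nat.add_one_mul_choose_eq K' d').symm

lemma choose_nat_id (K ℓ d : ℕ) (hd : 1 ≤ d) (hdK : d ≤ K) :
    K * (ℓ.choose d) * ((K - 1).choose (d - 1)) = ℓ * ((ℓ - 1).choose (d - 1)) * K.choose d := by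
  rcases Nat.eq_zero_or_pos ℓ with rfl | hℓ
  · rw [Nat.choose_eq_zero_of_lt hd]
    simp
  · have h1 := choose_mul_nat K d hd (le_trans hd hdK)
    have h2 := choose_mul_nat ℓ d hd hℓ
    have hdpos : 0 < d := hd
    apply Nat.eq_of_mul_eq_mul_right hdpos
    calc K * ℓ.choose d * (K - 1).choose (d - 1) * d
        = (K * (K - 1).choose (d - 1)) * (ℓ.choose d * d) := by ring
      _ = (K.choose d * d) * (ℓ * (ℓ - 1).choose (d - 1)) := by rw [h1, h2]
      _ = ℓ * (ℓ - 1).choose (d - 1) * K.choose d * d := by ring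

lemma choose_real_id (K ℓ d : ℕ) (hd : 1 ≤ d) (hdK : d ≤ K) :
    (K : ℝ) * (ℓ.choose d : ℝ) / (K.choose d : ℝ)
      = (ℓ : ℝ) * ((ℓ - 1).choose (d - 1) : ℝ) / ((K - 1).choose (d - 1) : ℝ) := by
  have hc1 : 0 < K.choose d := Nat.choose_pos hdK
  have hc2 : 0 < (K - 1).choose (d - 1) := Nat.choose_pos (by omega)
  have hc1' : ((K.choose d : ℕ) : ℝ) ≠ 0 := by positivity
  have hc2' : (((K - 1).choose (d - 1) : ℕ) : ℝ) ≠ 0 := by positivity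
  rw [div_eq_div_iff (by exact_mod_cast hc1') (by exact_mod_cast hc2')]
  exact_mod_cast choose_nat_id K ℓ d hd hdK

end Choose

section Concrete
variable (K N : ℕ) (d : Fin N → ℕ)

/-- permutation of servers acting on classes -/
def clsEquiv (σ : Fin K ≃ Fin K) : HetCls K N d ≃ HetCls K N d where
  toFun c := ⟨c.1, ⟨c.2.1.image σ, by
    rw [Finset.card_image_of_injective _ σ.injective]; exact c.2.2⟩⟩
  invFun c := ⟨c.1, ⟨c.2.1.image σ.symm, by
    rw [Finset.card_image_of_injective _ σ.symm.injective]; exact c.2.2⟩⟩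
  left_inv c := by
    rcases c with ⟨u, S, hS⟩
    refine congrArg (fun S' => (⟨u, S'⟩ : HetCls K N d)) (Subtype.ext ?_)
    show (S.image ⇑σ).image ⇑σ.symm = S
    rw [Finset.image_image, Equiv.symm_comp_self, Finset.image_id]
  right_inv c := by
    rcases c with ⟨u, S, hS⟩
    refine congrArg (fun S' => (⟨u, S'⟩ : HetCls K N d)) (Subtype.ext ?_)
    show (S.image ⇑σ.symm).image ⇑σ = S
    rw [Finset.image_image, Equiv.self_comp_symm, Finset.image_id]

lemma count_subsets (du : ℕ) (A : Finset (Fin K)) (r : ℝ) :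
    (∑ S : {S : Finset (Fin K) // S.card = du}, if S.1 ⊆ A then r else 0)
      = r * ((A.card).choose du : ℝ) := by
  classical
  rw [← Finset.sum_subtype (Finset.univ.filter (fun S : Finset (Fin K) => S.card = du))
      (fun S => by simp) (fun S => if S ⊆ A then r else 0)]
  rw [← Finset.sum_filter]
  have hset : (Finset.univ.filter (fun S : Finset (Fin K) => S.card = du)).filter
      (fun S => S ⊆ A) = A.powersetCard du := by
    ext S
    simp only [Finset.mem_filter, Finset.mem_univ, true_and, Finset.mem_powersetCard]
    tauto
  rw [hset, Finset.sum_const, Finset.card_powersetCard, nsmul_eq_mul]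
  ring

lemma lamA_het (p : Fin N → ℝ) (lam μ : ℝ)
    (hd1 : ∀ u, 1 ≤ d u) (hdK : ∀ u, d u ≤ K) (hμ : 0 < μ) (A : Finset (Fin K)) :
    lamA (fun c : HetCls K N d => c.2.1) (hetRate K N d p lam) A
      = μ * A.card * hetLoad K N d p lam μ A.card := by
  classical
  rw [lamA]
  rw [show (Finset.univ : Finset (HetCls K N d))
      = Finset.univ.sigma (fun _ => Finset.univ) from (Finset.univ_sigma_univ).symm]
  rw [← Finset.sum_sigma' Finset.univ (fun _ => Finset.univ)
    (fun u S => if (⟨u, S⟩ : HetCls K N d).2.1 ⊆ A then hetRate K N d p lam ⟨u, S⟩ else 0)]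
  have hinner : ∀ u : Fin N,
      (∑ S : {S : Finset (Fin K) // S.card = d u},
        if (⟨u, S⟩ : HetCls K N d).2.1 ⊆ A then hetRate K N d p lam ⟨u, S⟩ else 0)
      = (K : ℝ) * lam * p u / (K.choose (d u) : ℝ) * ((A.card).choose (d u) : ℝ) := by
    intro u
    rw [← count_subsets K (d u) A ((K : ℝ) * lam * p u / (K.choose (d u) : ℝ))]
    rfl
  rw [Finset.sum_congr rfl (fun u _ => hinner u)]
  rw [hetLoad, Finset.mul_sum, Finset.mul_sum]
  apply Finset.sum_congr rfl
  intro u _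
  have hkey := choose_real_id K A.card (d u) (hd1 u) (hdK u)
  have hμne : μ ≠ 0 := ne_of_gt hμ
  have h1 : (K : ℝ) * lam * p u / (K.choose (d u) : ℝ) * ((A.card).choose (d u) : ℝ)
      = lam * p u * ((K : ℝ) * ((A.card).choose (d u) : ℝ) / (K.choose (d u) : ℝ)) := by ring
  rw [h1, hkey]
  have hC : (((K - 1).choose (d u - 1) : ℕ) : ℝ) ≠ 0 := by
    have h := Nat.choose_pos (n := K - 1) (k := d u - 1) (by have := hd1 u; have := hdK u; omega)
    exact_mod_cast h.ne'
  field_simp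

end Concrete

section Univ2
variable {I Kt : Type} [Fintype I] [DecidableEq I] [Fintype Kt] [DecidableEq Kt]
variable {μ0 : ℝ} {Ka : I → Finset Kt} {lam : I → ℝ}

lemma GA_univ : GA μ0 Ka lam (Finset.univ : Finset Kt) = ∑' x : I → ℕ, fF μ0 Ka lam x := by
  rw [GA]
  exact tsum_congr fun x => if_pos (Finset.subset_univ _)

lemma GhA_univ : GhA μ0 Ka lam (Finset.univ : Finset Kt)
    = ∑' x : I → ℕ, (∑ i, (x i : ℝ)) * fF μ0 Ka lam x := by
  rw [GhA]
  exact tsum_congr fun x => if_pos (Finset.subset_univ _)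

end Univ2

lemma card_filter_lt (K ℓ : ℕ) (h : ℓ ≤ K) :
    (Finset.univ.filter (fun k : Fin K => (k : ℕ) < ℓ)).card = ℓ := by
  have heq : Finset.univ.filter (fun k : Fin K => (k : ℕ) < ℓ)
      = (Finset.range ℓ).attachFin (fun m hm => (Finset.mem_range.1 hm).trans_le h) := by
    ext k
    simp [Finset.mem_attachFin, Finset.mem_range]
  rw [heq, Finset.card_attachFin, Finset.card_range]

/-- In the randomized pool with heterogeneous degrees, if `G(λ) < ∞`
then `ψ = ∏_{ℓ=1}^K (1 − ρ_{|ℓ})`; and if moreover the mean-number-of-jobs series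
converges, then `L = ∑_{ℓ=1}^K ρ_{|ℓ}/(1 − ρ_{|ℓ})`. -/
theorem heterogeneous_degrees_randomized_pool
    (K N : ℕ) (hK : 1 ≤ K) (hN : 1 ≤ N)
    (d : Fin N → ℕ) (hd1 : ∀ u, 1 ≤ d u) (hdK : ∀ u, d u ≤ K)
    (lam μ : ℝ) (hlam : 0 < lam) (hμ : 0 < μ)
    (p : Fin N → ℝ) (hp : ∀ u, 0 ≤ p u) (hp1 : ∑ u, p u = 1)
    (hG : Summable (fun x : HetCls K N d → ℕ =>
      Phi (fun _ : Fin K => μ) (fun c => c.2.1) x *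
        ∏ c, hetRate K N d p lam c ^ x c)) :
    (Gf (fun _ : Fin K => μ) (fun c : HetCls K N d => c.2.1)
        (hetRate K N d p lam))⁻¹ =
      (∏ ℓ ∈ Finset.Icc 1 K, (1 - hetLoad K N d p lam μ ℓ)) ∧
    (Summable (fun x : HetCls K N d → ℕ =>
        (∑ c, (x c : ℝ)) * (Phi (fun _ : Fin K => μ) (fun c => c.2.1) x *
          ∏ c, hetRate K N d p lam c ^ x c)) →
      (Gf (fun _ : Fin K => μ) (fun c : HetCls K N d => c.2.1)
          (hetRate K N d p lam))⁻¹ *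
        (∑' x : HetCls K N d → ℕ,
          (∑ c, (x c : ℝ)) * (Phi (fun _ : Fin K => μ) (fun c => c.2.1) x *
            ∏ c, hetRate K N d p lam c ^ x c)) =
        ∑ ℓ ∈ Finset.Icc 1 K,
          hetLoad K N d p lam μ ℓ / (1 - hetLoad K N d p lam μ ℓ)) := by
  classical
  set Kac : HetCls K N d → Finset (Fin K) := fun c => c.2.1 with hKacDef
  set lamc : HetCls K N d → ℝ := hetRate K N d p lam with hlamcDef
  have hKa : ∀ c, (Kac c).Nonempty := fun c =>
    Finset.card_pos.1 (by show 0 < (c.2.1).card; rw [c.2.2]; exact hd1 c.1)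
  have hlam0 : ∀ c, 0 ≤ lamc c := by
    intro c
    apply div_nonneg
    · exact mul_nonneg (mul_nonneg (Nat.cast_nonneg K) hlam.le) (hp c.1)
    · exact Nat.cast_nonneg _
  have hf : Summable (fF μ Kac lamc) := hG.congr (fun x => rfl)
  -- reference sets
  set Aset : ℕ → Finset (Fin K) := fun ℓ => Finset.univ.filter (fun k : Fin K => (k : ℕ) < ℓ)
    with hAsetDef
  have hAcard : ∀ ℓ, ℓ ≤ K → (Aset ℓ).card = ℓ := fun ℓ h => card_filter_lt K ℓ h
  have hA0 : Aset 0 = ∅ := by ext k; simp [hAsetDef]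
  have hAK : Aset K = Finset.univ := by ext k; simp [hAsetDef, k.isLt]
  -- g functions
  set g : ℕ → ℝ := fun ℓ => GA μ Kac lamc (Aset ℓ) with hgDef
  set gh : ℕ → ℝ := fun ℓ => GhA μ Kac lamc (Aset ℓ) with hghDef
  set ρ : ℕ → ℝ := fun ℓ => hetLoad K N d p lam μ ℓ with hρDef
  -- invariance under permutations
  have hgcard : ∀ A B : Finset (Fin K), A.card = B.card →
      GA μ Kac lamc A = GA μ Kac lamc B := by
    intro A B hAB
    obtain ⟨σ, hσ⟩ := exists_perm_image hAB
    rw [← hσ]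
    exact GA_equiv (μ0 := μ) (Ka := Kac) (lam := lamc) hμ (clsEquiv K N d σ) σ
      (fun i => rfl) (fun i => rfl) B
  have hghcard : ∀ A B : Finset (Fin K), A.card = B.card →
      GhA μ Kac lamc A = GhA μ Kac lamc B := by
    intro A B hAB
    obtain ⟨σ, hσ⟩ := exists_perm_image hAB
    rw [← hσ]
    exact GhA_equiv (μ0 := μ) (Ka := Kac) (lam := lamc) hμ (clsEquiv K N d σ) σ
      (fun i => rfl) (fun i => rfl) B
  -- load of reference sets
  have hlamA : ∀ ℓ, ℓ ≤ K → lamA Kac lamc (Aset ℓ) = μ * ℓ * ρ ℓ := by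
    intro ℓ hℓ
    have := lamA_het K N d p lam μ hd1 hdK hμ (Aset ℓ)
    rw [hAcard ℓ hℓ] at this
    exact this
  -- recursion step
  have hstep : ∀ ℓ : ℕ, ℓ + 1 ≤ K → (1 - ρ (ℓ + 1)) * g (ℓ + 1) = g ℓ := by
    intro ℓ hℓ
    have hcard : (Aset (ℓ + 1)).card = ℓ + 1 := hAcard _ hℓ
    have hmaster := master_plain hμ hKa hlam0 hf (Aset (ℓ + 1))
    have herase : ∀ k ∈ Aset (ℓ + 1), GA μ Kac lamc ((Aset (ℓ + 1)).erase k) = g ℓ := by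
      intro k hk
      apply hgcard
      rw [Finset.card_erase_of_mem hk, hcard, hAcard ℓ (by omega)]
      omega
    rw [Finset.sum_congr rfl (fun k hk => by rw [herase k hk]), Finset.sum_const, hcard,
      nsmul_eq_mul, hlamA (ℓ + 1) hℓ] at hmaster
    have hμℓ : (μ : ℝ) * ((ℓ + 1 : ℕ) : ℝ) ≠ 0 := by
      apply mul_ne_zero (ne_of_gt hμ)
      exact_mod_cast Nat.succ_ne_zero ℓ
    have h3 : GA μ Kac lamc (Aset (ℓ + 1)) - g ℓ
        = ρ (ℓ + 1) * GA μ Kac lamc (Aset (ℓ + 1)) :=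
      mul_left_cancel₀ hμℓ (by linear_combination hmaster)
    have hX : g (ℓ + 1) = GA μ Kac lamc (Aset (ℓ + 1)) := rfl
    rw [hX]
    linarith
  have hg0 : g 0 = 1 := by
    show GA μ Kac lamc (Aset 0) = 1
    rw [hA0]
    exact GA_empty hKa
  have hgpos : ∀ ℓ, 0 < g ℓ := fun ℓ => lt_of_lt_of_le one_pos (GA_ge_one hμ hlam0 hf _)
  -- ρ < 1
  have hρlt : ∀ ℓ : ℕ, ℓ + 1 ≤ K → ρ (ℓ + 1) < 1 := by
    intro ℓ hℓ
    have h1 := hstep ℓ hℓ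
    have h2 := hgpos (ℓ + 1)
    have h3 := hgpos ℓ
    nlinarith
  -- telescoping product
  have claim1 : ∀ ℓ : ℕ, ℓ ≤ K → g ℓ * ∏ j ∈ Finset.Icc 1 ℓ, (1 - ρ j) = 1 := by
    intro ℓ
    induction ℓ with
    | zero =>
      intro _
      rw [show Finset.Icc 1 0 = ∅ from Finset.Icc_eq_empty (by omega), Finset.prod_empty, hg0]
      ring
    | succ n ih =>
      intro hn
      rw [Finset.prod_Icc_succ_top (by omega)]
      have h1 := hstep n hn
      have h2 := ih (by omega)
      calc g (n + 1) * ((∏ j ∈ Finset.Icc 1 n, (1 - ρ j)) * (1 - ρ (n + 1)))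
          = ((1 - ρ (n + 1)) * g (n + 1)) * ∏ j ∈ Finset.Icc 1 n, (1 - ρ j) := by ring
        _ = g n * ∏ j ∈ Finset.Icc 1 n, (1 - ρ j) := by rw [h1]
        _ = 1 := h2
  have hgK : g K = Gf (fun _ : Fin K => μ) (fun c : HetCls K N d => c.2.1)
      (hetRate K N d p lam) := by
    show GA μ Kac lamc (Aset K) = _
    rw [hAK, GA_univ, Gf]
    exact tsum_congr fun x => rfl
  have hgKne : g K ≠ 0 := (hgpos K).ne'
  constructor
  · rw [← hgK]
    exact inv_eq_of_mul_eq_one_right (claim1 K le_rfl)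
  · intro hS
    have hSf : Summable (fun x : HetCls K N d → ℕ =>
        (∑ c, (x c : ℝ)) * fF μ Kac lamc x) := hS.congr (fun x => rfl)
    have hstepH : ∀ ℓ : ℕ, ℓ + 1 ≤ K →
        (1 - ρ (ℓ + 1)) * gh (ℓ + 1) = gh ℓ + ρ (ℓ + 1) * g (ℓ + 1) := by
      intro ℓ hℓ
      have hcard : (Aset (ℓ + 1)).card = ℓ + 1 := hAcard _ hℓ
      have hmaster := master_hat hμ hKa hlam0 hf hSf (Aset (ℓ + 1))
      have herase : ∀ k ∈ Aset (ℓ + 1), GhA μ Kac lamc ((Aset (ℓ + 1)).erase k) = gh ℓ := by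
        intro k hk
        apply hghcard
        rw [Finset.card_erase_of_mem hk, hcard, hAcard ℓ (by omega)]
        omega
      rw [Finset.sum_congr rfl (fun k hk => by rw [herase k hk]), Finset.sum_const, hcard,
        nsmul_eq_mul, hlamA (ℓ + 1) hℓ] at hmaster
      have hμℓ : (μ : ℝ) * ((ℓ + 1 : ℕ) : ℝ) ≠ 0 := by
        apply mul_ne_zero (ne_of_gt hμ)
        exact_mod_cast Nat.succ_ne_zero ℓ
      have h3 : GhA μ Kac lamc (Aset (ℓ + 1)) - gh ℓ
          = ρ (ℓ + 1) * (GhA μ Kac lamc (Aset (ℓ + 1)) + GA μ Kac lamc (Aset (ℓ + 1))) :=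
        mul_left_cancel₀ hμℓ (by linear_combination hmaster)
      have hX : gh (ℓ + 1) = GhA μ Kac lamc (Aset (ℓ + 1)) := rfl
      have hY : g (ℓ + 1) = GA μ Kac lamc (Aset (ℓ + 1)) := rfl
      rw [hX, hY]
      linarith
    have hgh0 : gh 0 = 0 := by
      show GhA μ Kac lamc (Aset 0) = 0
      rw [hA0]
      exact GhA_empty hKa
    have claim2 : ∀ ℓ : ℕ, ℓ ≤ K →
        gh ℓ = g ℓ * ∑ j ∈ Finset.Icc 1 ℓ, ρ j / (1 - ρ j) := by
      intro ℓ
      induction ℓ with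
      | zero =>
        intro _
        rw [show Finset.Icc 1 0 = ∅ from Finset.Icc_eq_empty (by omega), Finset.sum_empty,
          hgh0]
        ring
      | succ n ih =>
        intro hn
        have h1 := hstep n hn
        have h2 := hstepH n hn
        have h3 := ih (by omega)
        have hρn : 1 - ρ (n + 1) ≠ 0 := by
          have := hρlt n hn
          intro hc
          rw [sub_eq_zero] at hc
          exact this.ne hc.symm
        rw [Finset.sum_Icc_succ_top (by omega)]
        apply mul_left_cancel₀ hρn
        have hexp : (1 - ρ (n + 1)) * (g (n + 1) *
            ((∑ j ∈ Finset.Icc 1 n, ρ j / (1 - ρ j)) + ρ (n + 1) / (1 - ρ (n + 1))))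
            = g n * (∑ j ∈ Finset.Icc 1 n, ρ j / (1 - ρ j)) + ρ (n + 1) * g (n + 1) := by
          rw [← h1]
          field_simp
        rw [hexp, h2, h3]
    have hghK : gh K = ∑' x : HetCls K N d → ℕ,
        (∑ c, (x c : ℝ)) * (Phi (fun _ : Fin K => μ) (fun c => c.2.1) x *
          ∏ c, hetRate K N d p lam c ^ x c) := by
      show GhA μ Kac lamc (Aset K) = _
      rw [hAK, GhA_univ]
      exact tsum_congr fun x => rfl
    rw [← hgK, ← hghK, claim2 K le_rfl, ← mul_assoc, inv_mul_cancel₀ hgKne, one_mul]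
end

section
/- Let E be a finite set and let F be a family of subsets of E such that for all A, B ∈ F, if A ∩ B ≠ ∅ then A ⊆ B or B ⊆ A. Then there exists a bijection σ : E → {1, …, |E|} such that for every A ∈ F, the image σ(A) is a set of consecutive integers, i.e. σ(A) = {a, a+1, …, b} for some a ≤ b. (In the language of the paper: every nested pool is a line pool.) -/
open scoped BigOperators

/-- Key lemma: for a laminar family `F`, every finset `s` can be enumerated by a
duplicate-free list in which each member of `F` contained in `s` occupies a
contiguous block. -/
lemma laminar_block_list {E : Type} [DecidableEq E] (F : Set (Finset E))
    (hF : ∀ A ∈ F, ∀ B ∈ F, (A ∩ B).Nonempty → A ⊆ B ∨ B ⊆ A) :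
    ∀ n (s : Finset E), s.card ≤ n → ∃ l : List E, l.Nodup ∧ l.toFinset = s ∧
      ∀ A ∈ F, A ⊆ s → ∃ l1 l2 l3 : List E, l = l1 ++ l2 ++ l3 ∧ l2.toFinset = A := by
  intro n
  induction n with
  | zero =>
    intro s hs
    have hs0 : s = ∅ := Finset.card_eq_zero.mp (Nat.le_zero.mp hs)
    refine ⟨[], by simp, by simp [hs0], ?_⟩
    intro A hA hAs
    have : A = ∅ := Finset.subset_empty.mp (hs0 ▸ hAs)
    exact ⟨[], [], [], by simp, by simp [this]⟩
  | succ n ih =>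
    intro s hs
    classical
    by_cases h : ∃ A, A ∈ F ∧ A ⊆ s ∧ A ≠ s ∧ A.Nonempty
    · -- pick a maximal (by cardinality) such A
      set T : Finset (Finset E) :=
        s.powerset.filter (fun A => A ∈ F ∧ A ≠ s ∧ A.Nonempty) with hT
      have hTne : T.Nonempty := by
        obtain ⟨A, hA1, hA2, hA3, hA4⟩ := h
        exact ⟨A, by simp [hT, Finset.mem_filter, Finset.mem_powerset, hA1, hA2, hA3, hA4]⟩
      obtain ⟨A, hAT, hAmax⟩ := T.exists_max_image Finset.card hTne
      rw [hT, Finset.mem_filter, Finset.mem_powerset] at hAT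
      have hAs := hAT.1
      have hAF := hAT.2.1
      have hAne := hAT.2.2.1
      have hAnon := hAT.2.2.2
      have hAcard : A.card < s.card := Finset.card_lt_card (hAs.ssubset_of_ne hAne)
      obtain ⟨lA, hlAnd, hlAfin, hlAblk⟩ := ih A (by omega)
      have hscard : (s \ A).card < s.card := by
        have := Finset.card_sdiff_of_subset hAs
        have := hAnon.card_pos
        omega
      obtain ⟨lB, hlBnd, hlBfin, hlBblk⟩ := ih (s \ A) (by omega)
      refine ⟨lA ++ lB, ?_, ?_, ?_⟩
      · rw [List.nodup_append]
        refine ⟨hlAnd, hlBnd, fun x hx x' hx' hxx' => ?_⟩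
        subst hxx'
        have h1 : x ∈ A := hlAfin ▸ List.mem_toFinset.mpr hx
        have h2 : x ∈ s \ A := hlBfin ▸ List.mem_toFinset.mpr hx'
        exact (Finset.mem_sdiff.mp h2).2 h1
      · rw [List.toFinset_append, hlAfin, hlBfin]
        exact Finset.union_sdiff_of_subset hAs
      · intro B hBF hBs
        by_cases hBemp : B = ∅
        · exact ⟨[], [], lA ++ lB, by simp, by simp [hBemp]⟩
        have hBnon : B.Nonempty := Finset.nonempty_iff_ne_empty.mpr hBemp
        by_cases hint : (B ∩ A).Nonempty
        · rcases hF B hBF A hAF hint with hBA | hAB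
          · obtain ⟨l1, l2, l3, heq, hfin⟩ := hlAblk B hBF hBA
            exact ⟨l1, l2, l3 ++ lB, by rw [heq]; simp, hfin⟩
          · by_cases hBseq : B = s
            · exact ⟨[], lA ++ lB, [], by simp, by
                rw [List.toFinset_append, hlAfin, hlBfin, hBseq]
                exact Finset.union_sdiff_of_subset hAs⟩
            · -- maximality forces B = A
              have hBT : B ∈ T := by
                simp [hT, Finset.mem_filter, Finset.mem_powerset, hBF, hBs, hBseq, hBnon]
              have hBA : B = A :=
                (Finset.eq_of_subset_of_card_le hAB (hAmax B hBT)).symm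
              exact ⟨[], lA, lB, by simp, hBA ▸ hlAfin⟩
        · have hBsA : B ⊆ s \ A := by
            intro x hx
            rw [Finset.mem_sdiff]
            refine ⟨hBs hx, fun hxA => ?_⟩
            exact hint ⟨x, Finset.mem_inter.mpr ⟨hx, hxA⟩⟩
          obtain ⟨l1, l2, l3, heq, hfin⟩ := hlBblk B hBF hBsA
          exact ⟨lA ++ l1, l2, l3, by rw [heq]; simp, hfin⟩
    · -- every member of F inside s is ∅ or s itself
      push_neg at h
      refine ⟨s.toList, s.nodup_toList, by simp, ?_⟩
      intro A hAF hAs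
      by_cases hA : A = s
      · exact ⟨[], s.toList, [], by simp, by simp [hA]⟩
      · have : ¬A.Nonempty := Finset.not_nonempty_iff_eq_empty.mpr (h A hAF hAs hA)
        rw [Finset.not_nonempty_iff_eq_empty] at this
        exact ⟨[], [], s.toList, by simp, by simp [this]⟩

/-- **every nested pool is a line pool.** If `F` is a laminar family of
subsets of a finite set `E` (any two intersecting members are comparable under
inclusion), then there is a bijection `σ` from `E` to `{1, …, |E|}` (here
`Fin (Fintype.card E)`) mapping every member of `F` to a set of consecutive integers,
i.e. to an integer interval `{a, a+1, …, b}`. -/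
theorem laminar_family_has_interval_labelling
    {E : Type} [Fintype E] [DecidableEq E] (F : Set (Finset E))
    (hF : ∀ A ∈ F, ∀ B ∈ F, (A ∩ B).Nonempty → A ⊆ B ∨ B ⊆ A) :
    ∃ σ : E ≃ Fin (Fintype.card E),
      ∀ A ∈ F, ∃ a b : ℕ,
        A.image (fun e => ((σ e : Fin (Fintype.card E)) : ℕ)) = Finset.Icc a b := by
  classical
  obtain ⟨l, hnd, hfin, hblk⟩ :=
    laminar_block_list F hF (Finset.univ : Finset E).card Finset.univ le_rfl
  have hmem : ∀ x : E, x ∈ l := fun x => by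
    rw [← List.mem_toFinset, hfin]; exact Finset.mem_univ x
  have hlen : l.length = Fintype.card E := by
    rw [← List.toFinset_card_of_nodup hnd, hfin, Finset.card_univ]
  set e : Fin l.length ≃ E := hnd.getEquivOfForallMemList l hmem with he
  refine ⟨e.symm.trans (finCongr hlen), ?_⟩
  intro A hAF
  obtain ⟨l1, l2, l3, heq, hAfin⟩ := hblk A hAF (Finset.subset_univ A)
  by_cases hAemp : A = ∅
  · exact ⟨1, 0, by simp [hAemp]⟩
  have hl2ne : l2 ≠ [] := by
    intro h0
    exact hAemp (by simp [← hAfin, h0])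
  have hl2len : 0 < l2.length := List.length_pos_iff.mpr hl2ne
  set f : E → ℕ := fun x => (((e.symm.trans (finCongr hlen)) x : Fin (Fintype.card E)) : ℕ)
    with hf
  refine ⟨l1.length, l1.length + l2.length - 1, ?_⟩
  have hl2nd : l2.Nodup := by
    rw [heq] at hnd
    exact (hnd.of_append_left).of_append_right
  have hcard : (A.image f).card = l2.length := by
    rw [Finset.card_image_of_injective _ ?inj, ← hAfin,
      List.toFinset_card_of_nodup hl2nd]
    case inj =>
      intro x y hxy
      exact (e.symm.trans (finCongr hlen)).injective (Fin.val_injective hxy)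
  have hIcc : Finset.Icc l1.length (l1.length + l2.length - 1) ⊆ A.image f := by
    intro k hk
    rw [Finset.mem_Icc] at hk
    have hk2 : k < l1.length + l2.length := by omega
    have hkl : k < l.length := by
      rw [heq]; simp; omega
    have hkl' : k < (l1 ++ (l2 ++ l3)).length := by simp; omega
    have hget : l[k] ∈ l2 := by
      have h1 : l[k] = (l1 ++ (l2 ++ l3))[k] :=
        List.getElem_of_eq (by rw [heq, List.append_assoc]) hkl
      rw [h1, List.getElem_append_right (by omega : l1.length ≤ k)]
      rw [List.getElem_append_left (by omega : k - l1.length < l2.length)]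
      exact List.getElem_mem _
    have hmemA : l[k] ∈ A := by rw [← hAfin]; exact List.mem_toFinset.mpr hget
    refine Finset.mem_image.mpr ⟨l[k], hmemA, ?_⟩
    have : e ⟨k, hkl⟩ = l[k] := by simp [he]
    rw [hf]
    simp only [Equiv.trans_apply, ← this, Equiv.symm_apply_apply]
    simp
  have hcIcc : (Finset.Icc l1.length (l1.length + l2.length - 1)).card = l2.length := by
    rw [Nat.card_Icc]; omega
  exact (Finset.eq_of_subset_of_card_le hIcc (by omega)).symm
end
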